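/- arXiv:2102.09411 — 8 statements merged into one kernel-verified Lean document; each statement's English description precedes it below -/
import Mathlib

section
/- Let n ≥ 2 and let m₁, …, mₙ be integers satisfying 2m₁ ≤ m₂, 2mᵢ ≤ m_{i−1} + m_{i+1} for all 2 ≤ i ≤ n−1, and 2mₙ ≤ m_{n−1}. Then for every i with 2 ≤ i ≤ n it holds i·m_{i−1} ≤ (i−1)·mᵢ. -/
/-- Let `n ≥ 2` and let `m₁, …, mₙ` be integers satisfying the inequalities coming from
the minimality property for the root system `Aₙ`:
`2m₁ ≤ m₂`, `2mᵢ ≤ m_{i-1} + m_{i+1}` for `2 ≤ i ≤ n-1`, and `2mₙ ≤ m_{n-1}`.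
Then `i * m_{i-1} ≤ (i-1) * mᵢ` for every `2 ≤ i ≤ n`. -/
theorem typeA_minimality_ineq (n : ℕ) (hn : 2 ≤ n) (m : ℕ → ℤ)
    (h1 : 2 * m 1 ≤ m 2)
    (hmid : ∀ i : ℕ, 2 ≤ i → i ≤ n - 1 → 2 * m i ≤ m (i - 1) + m (i + 1))
    (hn' : 2 * m n ≤ m (n - 1)) :
    ∀ i : ℕ, 2 ≤ i → i ≤ n → (i : ℤ) * m (i - 1) ≤ ((i : ℤ) - 1) * m i := by
  intro i hi
  induction i, hi using Nat.le_induction with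
  | base => intro _; push_cast; linarith
  | succ i hi IH =>
    intro hin
    have hle : i ≤ n - 1 := by omega
    have hmi := hmid i hi hle
    have IH' := IH (by omega)
    have hic : (2 : ℤ) ≤ (i : ℤ) := by exact_mod_cast hi
    have hmul : (i : ℤ) * (2 * m i) ≤ (i : ℤ) * (m (i - 1) + m (i + 1)) := by
      apply mul_le_mul_of_nonneg_left hmi; linarith
    have h2 : (i + 1 : ℕ) - 1 = i := by omega
    rw [h2]
    push_cast
    nlinarith [IH', hmul]
end

section
/- Let n ≥ 4 and let m₁, …, mₙ be integers satisfying 2m₁ ≤ m₂; 2mᵢ ≤ m_{i−1} + m_{i+1} for all 2 ≤ i ≤ n−3; 2m_{n−2} ≤ m_{n−3} + m_{n−1} + mₙ; 2m_{n−1} ≤ m_{n−2}; and 2mₙ ≤ m_{n−2}. If not all of m₁, …, mₙ are zero, then m₂ ≤ −2. -/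
/-- Let `n ≥ 4` and let `m₁, …, mₙ` be integers satisfying the inequalities coming from
the minimality property for the root system `Dₙ` (nodes `n-1` and `n` attached to `n-2`):
`2m₁ ≤ m₂`, `2mᵢ ≤ m_{i-1} + m_{i+1}` for `2 ≤ i ≤ n-3`,
`2m_{n-2} ≤ m_{n-3} + m_{n-1} + mₙ`, `2m_{n-1} ≤ m_{n-2}` and `2mₙ ≤ m_{n-2}`.
If not all of `m₁, …, mₙ` are zero, then `m₂ ≤ -2`. -/
theorem typeD_minimality_m2_le_neg_two (n : ℕ) (hn : 4 ≤ n) (m : ℕ → ℤ)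
    (h1 : 2 * m 1 ≤ m 2)
    (hmid : ∀ i : ℕ, 2 ≤ i → i ≤ n - 3 → 2 * m i ≤ m (i - 1) + m (i + 1))
    (hfork : 2 * m (n - 2) ≤ m (n - 3) + m (n - 1) + m n)
    (hleg1 : 2 * m (n - 1) ≤ m (n - 2))
    (hleg2 : 2 * m n ≤ m (n - 2))
    (hne : ∃ i : ℕ, 1 ≤ i ∧ i ≤ n ∧ m i ≠ 0) :
    m 2 ≤ -2 := by
  by_contra hcon
  push_neg at hcon
  obtain ⟨k, hk1, rfl⟩ : ∃ k, 1 ≤ k ∧ n = k + 3 := ⟨n - 3, by omega, by omega⟩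
  rw [show k + 3 - 2 = k + 1 from by omega, show k + 3 - 3 = k from by omega,
    show k + 3 - 1 = k + 2 from by omega] at hfork
  rw [show k + 3 - 1 = k + 2 from by omega, show k + 3 - 2 = k + 1 from by omega] at hleg1
  rw [show k + 3 - 2 = k + 1 from by omega] at hleg2
  have hmid' : ∀ i, 2 ≤ i → i ≤ k → 2 * m i ≤ m (i - 1) + m (i + 1) :=
    fun i h2 hk => hmid i h2 (by omega)
  -- the differences m (j+1) - m j are nondecreasing on [1, k]
  have mono : ∀ j, j ≤ k → ∀ i, 1 ≤ i → i ≤ j → m (i + 1) - m i ≤ m (j + 1) - m j := by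
    intro j
    induction j with
    | zero => intro _ i hi hij; omega
    | succ j ih =>
      intro hjk i hi hij
      rcases Nat.lt_or_ge i (j + 1) with h | h
      · have hij' : i ≤ j := by omega
        have ha : m (i + 1) - m i ≤ m (j + 1) - m j := ih (by omega) i hi hij'
        have hb := hmid' (j + 1) (by omega) hjk
        simp only [Nat.add_sub_cancel] at hb
        omega
      · have : i = j + 1 := by omega
        subst this; exact le_refl _
  have hdk : m (k + 1) ≤ m k := by linarith
  have hd1 : m 2 - m 1 ≤ m (k + 1) - m k := mono k le_rfl 1 le_rfl hk1
  have hm1 : m 1 = m 2 := by omega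
  have const : ∀ j, 1 ≤ j → j ≤ k + 1 → m j = m 2 := by
    intro j
    induction j with
    | zero => omega
    | succ j ih =>
      intro _ hj
      rcases Nat.eq_zero_or_pos j with h0 | h0
      · subst h0; exact hm1
      · have hjj : j ≤ k := by omega
        have e1 : m j = m 2 := ih h0 (by omega)
        have l1 : m 2 - m 1 ≤ m (j + 1) - m j := mono j hjj 1 le_rfl h0
        have l2 : m (j + 1) - m j ≤ m (k + 1) - m k := mono k le_rfl j h0 hjj
        omega
  have hkk1 : m (k + 1) = m 2 := const (k + 1) (by omega) le_rfl
  have hkk : m k = m 2 := const k hk1 (by omega)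
  have h23 : m (k + 2) = 0 ∧ m (k + 3) = 0 ∧ m 2 = 0 := by omega
  obtain ⟨i, hi1, hin, hi0⟩ := hne
  rcases Nat.lt_or_ge i (k + 2) with h | h
  · exact hi0 (by rw [const i hi1 (by omega), h23.2.2])
  · rcases (by omega : i = k + 2 ∨ i = k + 3) with rfl | rfl
    · exact hi0 h23.1
    · exact hi0 h23.2.1
end

section
/- Let m₁, …, m₆ be integers satisfying 2m₁ ≤ m₃, 2m₂ ≤ m₄, 2m₃ ≤ m₁ + m₄, 2m₄ ≤ m₂ + m₃ + m₅, 2m₅ ≤ m₄ + m₆, and 2m₆ ≤ m₅. If not all of m₁, …, m₆ are zero, then m₂ ≤ −2. -/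
/-- Inequalities coming from the minimality property for the root system `E₆`
(chain `1—3—4—5—6` with node `2` attached to node `4`):
if `2m₁ ≤ m₃`, `2m₂ ≤ m₄`, `2m₃ ≤ m₁ + m₄`, `2m₄ ≤ m₂ + m₃ + m₅`,
`2m₅ ≤ m₄ + m₆`, `2m₆ ≤ m₅` and not all of `m₁, …, m₆` are zero, then `m₂ ≤ -2`. -/
theorem typeE6_minimality_m2_le_neg_two (m1 m2 m3 m4 m5 m6 : ℤ)
    (h1 : 2 * m1 ≤ m3) (h2 : 2 * m2 ≤ m4) (h3 : 2 * m3 ≤ m1 + m4)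
    (h4 : 2 * m4 ≤ m2 + m3 + m5) (h5 : 2 * m5 ≤ m4 + m6) (h6 : 2 * m6 ≤ m5)
    (hne : ¬(m1 = 0 ∧ m2 = 0 ∧ m3 = 0 ∧ m4 = 0 ∧ m5 = 0 ∧ m6 = 0)) :
    m2 ≤ -2 := by
  have a3 : 3 * m3 ≤ 2 * m4 := by omega
  have a5 : 3 * m5 ≤ 2 * m4 := by omega
  have a4 : 2 * m4 ≤ 3 * m2 := by omega
  rcases (by omega : m2 = 0 ∨ m2 = -1 ∨ m2 ≤ -2) with h | h | h
  · subst h; omega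
  · subst h
    have hc : m4 = -2 := by omega
    omega
  · exact h
end

section
/- Let m₁, …, m₇ be integers satisfying 2m₁ ≤ m₃, 2m₂ ≤ m₄, 2m₃ ≤ m₁ + m₄, 2m₄ ≤ m₂ + m₃ + m₅, 2m₅ ≤ m₄ + m₆, 2m₆ ≤ m₅ + m₇, and 2m₇ ≤ m₆. If not all of m₁, …, m₇ are zero, then m₁ ≤ −2. -/
private lemma typeE7_aux (t1 t2 t3 t4 t5 t6 t7 m1 m2 : ℤ)
    (p1 : 0 ≤ t1) (p2 : 0 ≤ t2) (p3 : 0 ≤ t3) (p4 : 0 ≤ t4)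
    (p5 : 0 ≤ t5) (p6 : 0 ≤ t6) (p7 : 0 ≤ t7)
    (e1 : m1 = -(2*t1 + 2*t2 + 3*t3 + 4*t4 + 3*t5 + 2*t6 + t7))
    (e2 : 2 * m2 = -(4*t1 + 7*t2 + 8*t3 + 12*t4 + 9*t5 + 6*t6 + 3*t7))
    (h : -2 < m1) :
    t1 = 0 ∧ t2 = 0 ∧ t3 = 0 ∧ t4 = 0 ∧ t5 = 0 ∧ t6 = 0 ∧ t7 = 0 := by
  omega

/-- Inequalities coming from the minimality property for the root system `E₇`
(chain `1—3—4—5—6—7` with node `2` attached to node `4`):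
if `2m₁ ≤ m₃`, `2m₂ ≤ m₄`, `2m₃ ≤ m₁ + m₄`, `2m₄ ≤ m₂ + m₃ + m₅`,
`2m₅ ≤ m₄ + m₆`, `2m₆ ≤ m₅ + m₇`, `2m₇ ≤ m₆` and not all of
`m₁, …, m₇` are zero, then `m₁ ≤ -2`. -/
theorem typeE7_minimality_m1_le_neg_two (m1 m2 m3 m4 m5 m6 m7 : ℤ)
    (h1 : 2 * m1 ≤ m3) (h2 : 2 * m2 ≤ m4) (h3 : 2 * m3 ≤ m1 + m4)
    (h4 : 2 * m4 ≤ m2 + m3 + m5) (h5 : 2 * m5 ≤ m4 + m6)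
    (h6 : 2 * m6 ≤ m5 + m7) (h7 : 2 * m7 ≤ m6)
    (hne : ¬(m1 = 0 ∧ m2 = 0 ∧ m3 = 0 ∧ m4 = 0 ∧ m5 = 0 ∧ m6 = 0 ∧ m7 = 0)) :
    m1 ≤ -2 := by
  by_contra h
  push_neg at h
  have e1 : m1 = -(2*(m3 - 2*m1) + 2*(m4 - 2*m2) + 3*(m1 + m4 - 2*m3)
      + 4*(m2 + m3 + m5 - 2*m4) + 3*(m4 + m6 - 2*m5) + 2*(m5 + m7 - 2*m6)
      + (m6 - 2*m7)) := by ring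
  have e2 : 2 * m2 = -(4*(m3 - 2*m1) + 7*(m4 - 2*m2) + 8*(m1 + m4 - 2*m3)
      + 12*(m2 + m3 + m5 - 2*m4) + 9*(m4 + m6 - 2*m5) + 6*(m5 + m7 - 2*m6)
      + 3*(m6 - 2*m7)) := by ring
  obtain ⟨z1, z2, z3, z4, z5, z6, z7⟩ :=
    typeE7_aux (m3 - 2*m1) (m4 - 2*m2) (m1 + m4 - 2*m3) (m2 + m3 + m5 - 2*m4)
      (m4 + m6 - 2*m5) (m5 + m7 - 2*m6) (m6 - 2*m7)
      m1 m2 (by omega) (by omega) (by omega) (by omega) (by omega) (by omega)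
      (by omega) e1 e2 h
  omega
end

section
/- Let m₁, …, m₈ be integers satisfying 2m₁ ≤ m₃, 2m₂ ≤ m₄, 2m₃ ≤ m₁ + m₄, 2m₄ ≤ m₂ + m₃ + m₅, 2m₅ ≤ m₄ + m₆, 2m₆ ≤ m₅ + m₇, 2m₇ ≤ m₆ + m₈, and 2m₈ ≤ m₇. Then 3m₃ ≤ 2m₄, 5m₄ ≤ 6m₅, 4m₅ ≤ 5m₆, 3m₆ ≤ 4m₇, and 2m₇ ≤ 3m₈. -/
/-- Inequalities coming from the minimality property for the root system `E₈`
(chain `1—3—4—5—6—7—8` with node `2` attached to node `4`):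
if `2m₁ ≤ m₃`, `2m₂ ≤ m₄`, `2m₃ ≤ m₁ + m₄`, `2m₄ ≤ m₂ + m₃ + m₅`,
`2m₅ ≤ m₄ + m₆`, `2m₆ ≤ m₅ + m₇`, `2m₇ ≤ m₆ + m₈` and `2m₈ ≤ m₇`, then
`3m₃ ≤ 2m₄`, `5m₄ ≤ 6m₅`, `4m₅ ≤ 5m₆`, `3m₆ ≤ 4m₇` and `2m₇ ≤ 3m₈`. -/
theorem typeE8_minimality_ineq (m1 m2 m3 m4 m5 m6 m7 m8 : ℤ)
    (h1 : 2 * m1 ≤ m3) (h2 : 2 * m2 ≤ m4) (h3 : 2 * m3 ≤ m1 + m4)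
    (h4 : 2 * m4 ≤ m2 + m3 + m5) (h5 : 2 * m5 ≤ m4 + m6)
    (h6 : 2 * m6 ≤ m5 + m7) (h7 : 2 * m7 ≤ m6 + m8) (h8 : 2 * m8 ≤ m7) :
    3 * m3 ≤ 2 * m4 ∧ 5 * m4 ≤ 6 * m5 ∧ 4 * m5 ≤ 5 * m6 ∧
      3 * m6 ≤ 4 * m7 ∧ 2 * m7 ≤ 3 * m8 := by
  refine ⟨by linarith, by linarith, by linarith, by linarith, by linarith⟩
end

section
/- Let m₁, …, m₈ be integers satisfying 2m₁ ≤ m₃, 2m₂ ≤ m₄, 2m₃ ≤ m₁ + m₄, 2m₄ ≤ m₂ + m₃ + m₅, 2m₅ ≤ m₄ + m₆, 2m₆ ≤ m₅ + m₇, 2m₇ ≤ m₆ + m₈, and 2m₈ ≤ m₇. If not all of m₁, …, m₈ are zero, then m₈ ≤ −2. -/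
/-- Inequalities coming from the minimality property for the root system `E₈`
(chain `1—3—4—5—6—7—8` with node `2` attached to node `4`):
if `2m₁ ≤ m₃`, `2m₂ ≤ m₄`, `2m₃ ≤ m₁ + m₄`, `2m₄ ≤ m₂ + m₃ + m₅`,
`2m₅ ≤ m₄ + m₆`, `2m₆ ≤ m₅ + m₇`, `2m₇ ≤ m₆ + m₈`, `2m₈ ≤ m₇` and not all of
`m₁, …, m₈` are zero, then `m₈ ≤ -2`. -/
theorem typeE8_minimality_m8_le_neg_two (m1 m2 m3 m4 m5 m6 m7 m8 : ℤ)
    (h1 : 2 * m1 ≤ m3) (h2 : 2 * m2 ≤ m4) (h3 : 2 * m3 ≤ m1 + m4)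
    (h4 : 2 * m4 ≤ m2 + m3 + m5) (h5 : 2 * m5 ≤ m4 + m6)
    (h6 : 2 * m6 ≤ m5 + m7) (h7 : 2 * m7 ≤ m6 + m8) (h8 : 2 * m8 ≤ m7)
    (hne : ¬(m1 = 0 ∧ m2 = 0 ∧ m3 = 0 ∧ m4 = 0 ∧ m5 = 0 ∧ m6 = 0 ∧ m7 = 0 ∧ m8 = 0)) :
    m8 ≤ -2 := by
  -- slack variables: d = -(Cartan matrix) · m, each nonnegative
  set d1 := m3 - 2*m1 with hd1
  set d2 := m4 - 2*m2 with hd2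
  set d3 := m1 + m4 - 2*m3 with hd3
  set d4 := m2 + m3 + m5 - 2*m4 with hd4
  set d5 := m4 + m6 - 2*m5 with hd5
  set d6 := m5 + m7 - 2*m6 with hd6
  set d7 := m6 + m8 - 2*m7 with hd7
  set d8 := m7 - 2*m8 with hd8
  have q1 : 0 ≤ d1 := by omega
  have q2 : 0 ≤ d2 := by omega
  have q3 : 0 ≤ d3 := by omega
  have q4 : 0 ≤ d4 := by omega
  have q5 : 0 ≤ d5 := by omega
  have q6 : 0 ≤ d6 := by omega
  have q7 : 0 ≤ d7 := by omega
  have q8 : 0 ≤ d8 := by omega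
  -- row 8 of the (integral) inverse Cartan matrix of E₈
  have e8 : m8 = -(2*d1 + 3*d2 + 4*d3 + 6*d4 + 5*d5 + 4*d6 + 3*d7 + 2*d8) := by
    simp only [hd1,hd2,hd3,hd4,hd5,hd6,hd7,hd8]; ring
  -- not all slacks are zero (else all mᵢ = 0, contradicting hne)
  have hsum : 1 ≤ d1 + d2 + d3 + d4 + d5 + d6 + d7 + d8 := by
    by_contra hc
    push_neg at hc
    have hz1 : d1 = 0 := by omega
    have hz2 : d2 = 0 := by omega
    have hz3 : d3 = 0 := by omega
    have hz4 : d4 = 0 := by omega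
    have hz5 : d5 = 0 := by omega
    have hz6 : d6 = 0 := by omega
    have hz7 : d7 = 0 := by omega
    have hz8 : d8 = 0 := by omega
    exact hne (by omega)
  -- since every coefficient in e8 is at least 2:
  linarith
end

section
/- Let G be the subgroup of GL₄(𝔽₂) generated by g₁ = [[1,0,0,0],[0,1,0,0],[0,0,0,1],[0,0,1,0]] and g₂ = [[0,1,0,1],[1,0,0,0],[0,0,0,1],[1,0,1,0]]. Then G has exactly 9 conjugacy classes. -/
namespace ODiscAux

set_option maxHeartbeats 4000000
set_option maxRecDepth 100000

def mL : List (Matrix (Fin 4) (Fin 4) (ZMod 2)) := [!![1,0,0,0; 0,1,0,0; 0,0,0,1; 0,0,1,0], !![0,1,0,1; 1,0,0,0; 0,0,0,1; 1,0,1,0], !![1,0,0,0; 0,1,0,0; 0,0,1,0; 0,0,0,1], !![0,1,0,1; 1,0,0,0; 1,0,1,0; 0,0,0,1], !![0,1,1,0; 1,0,0,0; 0,0,1,0; 1,0,0,1], !![0,0,1,0; 0,1,0,1; 1,0,1,0; 0,1,0,0], !![0,1,1,0; 1,0,0,0; 1,0,0,1; 0,0,1,0], !![0,0,1,0; 0,1,0,1;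 0,1,0,0; 1,0,1,0], !![1,0,0,1; 0,1,0,1; 0,0,0,1; 1,1,1,1], !![0,0,0,1; 0,1,1,0; 1,0,0,1; 0,1,0,0], !![0,0,0,1; 0,0,1,0; 0,1,0,0; 1,0,0,0], !![1,0,0,1; 0,1,0,1; 1,1,1,1; 0,0,0,1], !![0,0,0,1; 0,1,1,0; 0,1,0,0; 1,0,0,1], !![0,0,0,1; 0,0,1,0; 1,0,0,0; 0,1,0,0], !![1,0,1,0; 0,1,1,0; 0,0,1,0; 1,1,1,1], !![1,1,1,1; 0,0,1,0; 1,0,1,0; 0,1,1,0], !![1,0,1,0; 1,0,0,1; 1,1,1,1; 1,0,0,0], !![0,0,1,0; 0,0,0,1; 0,1,0,0; 1,0,0,0], !![1,0,1,0; 0,0,0,1; 1,0,0,0; 0,1,0,1], !![1,0,1,0; 0,1,1,0; 1,1,1,1; 0,0,1,0], !![1,1,1,1; 0,0,1,0; 0,1,1,0; 1,0,1,0], !![1,0,1,0; 1,0,0,1; 1,0,0,0; 1,1,1,1], !![0,0,1,0; 0,0,0,1; 1,0,0,0; 0,1,0,0], !![1,0,1,0; 0,0,0,1; 0,1,0,1;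 1,0,0,0], !![0,1,0,0; 1,0,0,1; 0,0,0,1; 0,1,1,0], !![1,1,1,1; 0,0,0,1; 1,0,0,1; 0,1,0,1], !![0,1,1,0; 0,0,0,1; 0,1,0,0; 1,0,0,1], !![1,0,0,1; 1,0,1,0; 1,1,1,1; 1,0,0,0], !![0,1,0,0; 1,1,1,1; 0,1,1,0; 0,1,0,1], !![0,0,0,1; 1,0,1,0; 1,0,0,0; 0,1,0,1], !![1,0,0,1; 0,0,1,0; 1,0,0,0; 0,1,1,0], !![0,1,0,0; 1,0,1,0; 0,1,0,1; 0,0,1,0], !![0,1,0,0; 1,0,0,1; 0,1,1,0; 0,0,0,1], !![1,1,1,1; 0,0,0,1; 0,1,0,1; 1,0,0,1], !![0,1,1,0; 0,0,0,1; 1,0,0,1; 0,1,0,0], !![1,0,0,1; 1,0,1,0; 1,0,0,0; 1,1,1,1], !![0,1,0,0; 1,1,1,1; 0,1,0,1; 0,1,1,0], !![0,0,0,1; 1,0,1,0; 0,1,0,1; 1,0,0,0], !![1,0,0,1; 0,0,1,0; 0,1,1,0; 1,0,0,0], !![0,1,0,0; 1,0,1,0; 0,0,1,0; 0,1,0,1],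 !![1,0,0,0; 1,1,1,1; 1,0,1,0; 1,0,0,1], !![0,1,1,0; 1,0,1,0; 1,1,1,1; 0,0,1,0], !![0,1,0,1; 0,0,1,0; 0,1,0,0; 1,0,1,0], !![1,1,1,1; 0,1,0,0; 0,1,1,0; 0,1,0,1], !![1,0,0,0; 0,1,1,0; 1,0,0,1; 0,0,1,0], !![0,0,1,0; 1,0,0,1; 1,0,0,0; 0,1,1,0], !![1,0,1,0; 0,1,0,0; 0,1,0,1; 0,0,1,0], !![1,0,0,0; 1,1,1,1; 1,0,0,1; 1,0,1,0], !![0,1,1,0; 1,0,1,0; 0,0,1,0; 1,1,1,1], !![0,1,0,1; 0,0,1,0; 1,0,1,0; 0,1,0,0], !![1,1,1,1; 0,1,0,0; 0,1,0,1; 0,1,1,0], !![1,0,0,0; 0,1,1,0; 0,0,1,0; 1,0,0,1], !![0,0,1,0; 1,0,0,1; 0,1,1,0; 1,0,0,0], !![1,0,1,0; 0,1,0,0; 0,0,1,0; 0,1,0,1], !![0,1,0,1; 0,1,1,0; 0,1,0,0; 1,1,1,1], !![0,1,0,1; 1,0,0,1; 1,1,1,1; 0,0,0,1], !![1,0,0,1;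 0,1,0,0; 0,1,1,0; 0,0,0,1], !![1,0,0,0; 0,1,0,1; 1,0,1,0; 0,0,0,1], !![0,0,0,1; 1,1,1,1; 0,1,0,1; 1,0,0,1], !![0,1,0,0; 1,0,0,0; 0,0,1,0; 0,0,0,1], !![0,1,0,1; 0,1,1,0; 1,1,1,1; 0,1,0,0], !![0,1,0,1; 1,0,0,1; 0,0,0,1; 1,1,1,1], !![1,0,0,1; 0,1,0,0; 0,0,0,1; 0,1,1,0], !![1,0,0,0; 0,1,0,1; 0,0,0,1; 1,0,1,0], !![0,0,0,1; 1,1,1,1; 1,0,0,1; 0,1,0,1], !![0,1,0,0; 1,0,0,0; 0,0,0,1; 0,0,1,0], !![0,1,1,0; 0,1,0,1; 0,1,0,0; 1,1,1,1], !![0,0,1,0; 1,1,1,1; 0,1,1,0; 1,0,1,0], !![1,1,1,1; 1,0,0,0; 1,0,0,1; 1,0,1,0], !![0,1,1,0; 0,1,0,1; 1,1,1,1; 0,1,0,0], !![0,0,1,0; 1,1,1,1; 1,0,1,0; 0,1,1,0], !![1,1,1,1; 1,0,0,0; 1,0,1,0; 1,0,0,1]]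

def mT (i : Fin 72) : Matrix (Fin 4) (Fin 4) (ZMod 2) := mL.getD i.val 0

def tR : List Nat := [28039659335178654103942145145402952388431445406493445997257731158985190824449651175156499089401495770728750533458368374344502161173304783560256927039874, 26308911763191251734112067772663392996847619452981012697738827537367610841466028948694403334652402425911045256770248524887754209741941252081961614197380, 29276845156715595610429827819800492485719134167895613756073016280989266348450166320865584378359825785476986143313615574648499259736080554299768124244096, 23828219925121659437510983481587703100540657287063068650149658268631633882463432143810255091782853761152841178353785349535600759090156445359764582482822, 28799291725197510272661298157427387005533856374031455155767161179076269873182030861271727546961061780951601179239733590051640196301752719502664102118401, 9478759943461398550451496712043156567039332944720378456862456279492697939713216494467696650550334334543918274871941629961701646388535428235113147745545, 27549267500799453118068161719294708672692141992892470778588404875123838414814255239183477430763886025527047444063198825137180271345279543232780470158723, 7417105696458492582938187291174768634546245597345234909955948519364197530320972252616096035679432811352536610798611308098795018728553613026340418733708, 14014637745423757725996057569373691803301254179081264971582361440492347458103736193186698262261655365778483743495474376453444318738947611572204250204046, 15760564146905177074710824754908602351469921918720690903741389420958828495022300574702962312390085695011718839622400299998868286213269798105359596013573, 14453050591118598165684520944509598173860113070122246189861856089152205161769211432332027538420411746613357244432260600395498809576036002683854608566545,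 10715797286820819585294805542810338525642487840794311885061904072929888195444060904754522094177642985445961020414092559933913192823491269654814040181267, 12496562775575128592835307242930773074791582650982102624562823982590544928441889443376276457224760126018258958629814079703611922389217400284074448456327, 11201835901672202185667931241433810197220591332794700983369573275767055979526185442618457968694331420055761276368077909206500564169519620771159977708438, 20232408673136723991628623004909138094662724098036761463561501948312524307491157406941831641070704292086932186404405305818671116647863603578557157313544, 12778272089818168428378249271184715416141898337506176932311887696954121489756692205368418939635213306265458554476097674145466882629529780440004124986649, 22096148799784204443198280050830568422918701179622632830893919712832468535345841207188123298340613900397130478979524034224453551630998448469119638703643, 8654642676693267813695742712556894537246197942191521547109750133702901227616913465718316603075613404088130431745346969909821968278623389785404605746826, 22668997228658064268581883284769045103624413914716526454925585302122968451820175959681646721771099260976654044693877741516116170518022240303145866792862, 17387570133218345572157838188189788027461751078909181605451567879853213394629414939610579659098759591992375829133366227645503623370694165839401080639499, 16077059678447975908683720201591427058520070973956271110257367866634859405271166667468277119979612359187232761719896973209390082193000863920400825127201, 24557785464909483668220176639751259157567936227999733472196955625007637003053931524776049540073975416956725289458508840077542034586017364188162284671523, 6592613825961957864069871132809137262764917820768004947982296484614824959325247717119457838026624656288217728084421273494720264935266396015446037205645,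 25101814688508953713300661112659691813603865430212505625467205731820056414226708414180026780086524038613187976545697856693969753815972200223069864055718, 18142165313222842252689636092919663501803672112984492441832125897974248779999404631044134867584764496983847593809153898345561125470093978867526009230375, 13131978518901485705791388212606673085063924933060587852001986364378481073333965721329309391489828089981591526407823854129972722278641588932814924305551, 18605776903832376870645208974846281781132898268114383529257884120713678649176826887610125048324346308823548797770352588990365565204295561175029900546474, 27214390464395392335516574584857529439078120668442830335833038634505143408412946531155394295737753476626451721511955047765430593975053787027810604733840, 923912739075099201368665152514076381964232315739866741159161075997156062142339299960834573790596772504897092944982218971968566405397156541884988331556, 4514501723650834446444299650181251492554428833277285507571520640510282265213283824751558226100194851122421628667369594515054773761372473784193258051373, 16902481082214927060004936606551112647078412465386600718265071989819347157225272841675212899256773302098753858079117444083624726059219617616296837353618, 25996858072907215643659054884679450543876147380444181682690734175090947544812934969902256189696524605249461988460264449302890398627408582243653551374624, 21028934772813076411519642356362114724987068280010285919135066414394144732519096947527091843063254245917251440074882052774986792851694584216649365723039, 9848949524466747134390799331185173972905905753573681045246826390760354436283940485179925429016098760841836292083611574625317192269998233121771275966484, 21450990053707975980851907120497398841446529933881277463462377366870521412622068493957078518631251613938253286443140540621629808380961503502639959674289,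 28422907910981404133580522103746199522704155893731739772853818649671130770551020408119592495220514525160190421008208834562487569673049918922017120770325, 79942177436131337856423584982878167173613900920709493518117831503234757914434559175208914621466865380665608264065187712350723725953299102894536595868, 3293172808537419935877443436330336230509877845624151667091627229440463958299684403645670776385649406917342576404061973052914580923890915286058881604276, 19741200582022938773357451334853489127000943815436921585196967001887833336659749037371574259038691642236945364589965301513383165455930720194066519788695, 23551253908083431434423269026444104583859093168305832225805853104595329341446951096114119102216762100613980806139469931715834564947115425390105834668056, 20529176310285994411903376902590468342507597774838299799136056148743784313292684964885183577835332358408788653381127102802838075581880363526600541215535, 2867940342154410476389750318131935379510109393058097000883314926959171325816940957014917008240845698034699832881990407414412526365593987786394693164087, 11953808420794750910475528527800144987669659450580562165693191362415737914984161165417767786568714434413535707142518039229731616581856881911918962051866, 24328098920888098246295743927685598804929478247414696864577304715551122095351258979906846714468603213838072446881734050558056741222804946031307110662962, 8207058472399709607854141925679922593336947459213416176487883664552146076991651316005590018207751862152866754473188166891543622862719915562979434372025, 7944227863525664896037074359656115439856947748690308338302094202304876621823942022700951915249404019525344048496639571186332776496228294050462221163805, 559617967495320716863703904546204407001184528669654633421891048229662512846615963099563964687642022378408771190946599136816679711396337631598213832120,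 17648927601231965151802342885299852280854400040269713788155051638402712443672879920436431535696817760566600547410341536339590751162526048612015154126376, 2055860566759805356148521040495634694124450337033038267635759588257546802398010003537651156189690703416560944746758104081492891674902337207691882798909, 15252923593448568059098834483542763109265361887865336123824856574635247360624418722146550426624936350103476315097322737744530618078667193839049669101730, 26802470563961137348182794434214326117918291882125974824575867521070200124275132293006672016743433268779156868487501386960802121154130079733874107908651, 6154619633214505243651442035834774201684944610212240184682344626623433617271420797429207651136319102100767675114626356750036655327997763650312083398335, 5875856587665076250016847688196710858142665214969495745422250245302539476737263857122835736818318129160743912233088530941333005838163712964995889045541, 1355664225873773302041797104336368942385683384903469653255337435261324533493288322416303351316682766663290166650976212272626498106978928468478877589694, 5355351527589024658639021742582786562032074953956288637489922085872482673282248082759089526581584638296366668990065035298162328453006876460693343540930, 5108605513197074780334939709007644161522129389440723748489039154438365676185423806213471160014088864567235716109373784697479631988291568186407611392425, 1751900579295753881629947392064873338132164188671665796949699334978459356879277566727011462954099586139339149930745864918921070495223378966104387756590, 13647439459806073645283637258591631975721890106607859873507766819018967010653756441195107524011831497838950086497942649171192945067968963594979826881836, 25479097694671891377368950328362813886123420021954821930706050517264244478391990734869176069840682668132990585665489395638844428678521423037879110502211,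 16416410737782985470210421994218559498970111217264662186320586960680048623992765806308880802961114808242488336638648043932837422437602843701956691550145, 4118039279713494758892876863636366244517784259600536266756459724964281042690368722181924092185231737008219016073193742462444990922972863837205118786117, 3861828702947673396689183246946147363388381590517701157827315879425320016485602715654990956134090333364116964272783791718942668085719099736814357799728, 2544725194706480905114467177772895220621996568406286845119472026250392061969928727458953904394654005479281274538793309945823784370211865828171210269621, 10396224774933762420226076826201067448601456113382255762485283043641254240865902306945105534133016189586497980103171280835121245386498741549474130155699, 22998330157272724214333798830060043839355778997115711115713145365988812974210688823842273336246027277538361920561898996892581305888500996028527608334790, 19296459655024508185242184054398135457358101675599575955022663377057683519218015997337110521282267617835855885889432797744847289684589293370702438620347, 9178218005433247920548041798756403208398279783455432374557690387848050579041726661703495486902230714363025127051400661592302716567998660942744075145014, 21761521501727133883597586669390210367440948064733925578021935725562341269421934293234251526326860815564376245555249284070388908591846689746338811266234, 11490114550478274166662243367881632528931950294197645939901267959741942924608143811513500936234285909720904448453142282695263849991669945152021455774407, 7151403438652553585751707015088812261003717547011776689858440392948264353411748789828795160347279651130855086555249485314274752608539806555591635194684, 18881245262353132441934462581637003524601752051539712220533112355215075408437028827956332176461771474519190424034590463600961589819719089648353108133440,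 14772918786639034631129172845894566456533108876566166365621678875806538072478074647631728633308293768876145861243105636114406844743662838855732705747268]

def tab (i j : Fin 72) : Fin 72 := ⟨tR.getD i.val 0 / 128 ^ j.val % 128 % 72, Nat.mod_lt _ (by norm_num)⟩

def invN : Nat := 11524628635641675067502324532645466394026979185903540952768861146266301217030452998720658088000562994714283799254619442655999139310535008895609717428096
def clsN : Nat := 2049092339922542805899957764242803871236471060933950770847774275746901051592373581131793155539612610294733784085596122606279094283776736649865020342400
def repN : Nat := 2600310057184821376
def wN : Nat := 3702095660239207629420468838039237688107918377407649233635789627092060476447966816939216440390523549434715411037380858708194558767594596145986956951680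
def p1N : Nat := 25565283562550165398799706860323931149132844986967335633440734727804633614920553257579605819249874110014304332825329845900075736202209525301132941852672
def p2N : Nat := 412370693136210751119878088145007627159308952421580418342565895912126881555622788533818101870856823593293040491332773903025264386145086300882735202304

def invF (i : Fin 72) : Fin 72 := ⟨invN / 128 ^ i.val % 128 % 72, Nat.mod_lt _ (by norm_num)⟩
def clsF (i : Fin 72) : Fin 9 := ⟨clsN / 128 ^ i.val % 128 % 9, Nat.mod_lt _ (by norm_num)⟩
def repF (p : Fin 9) : Fin 72 := ⟨repN / 128 ^ p.val % 128 % 72, Nat.mod_lt _ (by norm_num)⟩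
def wF (i : Fin 72) : Fin 72 := ⟨wN / 128 ^ i.val % 128 % 72, Nat.mod_lt _ (by norm_num)⟩
def p1F (i : Fin 72) : Fin 72 := ⟨p1N / 128 ^ i.val % 128 % 72, Nat.mod_lt _ (by norm_num)⟩
def p2F (i : Fin 72) : Fin 72 := ⟨p2N / 128 ^ i.val % 128 % 72, Nat.mod_lt _ (by norm_num)⟩

def z0 : Fin 72 := ⟨0, by norm_num⟩
def z1 : Fin 72 := ⟨1, by norm_num⟩
def e0 : Fin 72 := ⟨2, by norm_num⟩

theorem G1a : mT z0 = !![1,0,0,0; 0,1,0,0; 0,0,0,1; 0,0,1,0] := rfl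
theorem G1b : mT z1 = !![0,1,0,1; 1,0,0,0; 0,0,0,1; 1,0,1,0] := rfl
theorem G2 : ∀ i j : Fin 72, j.val < 2 → mT i * mT j = mT (tab i j) := by decide
theorem G3 : mT e0 = 1 := by decide
theorem G4 : ∀ a b : Fin 72, mT a = mT b → a = b := by decide

theorem I1 : ∀ i j : Fin 72, 2 ≤ j.val → tab (tab i (p1F j)) (p2F j) = tab i j := by decide
theorem I2 : ∀ j : Fin 72, 2 ≤ j.val →
    tab (p1F j) (p2F j) = j ∧ (p1F j).val < j.val ∧ (p2F j).val < j.val := by decide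
theorem I3 : ∀ i : Fin 72, tab i (invF i) = e0 ∧ tab (invF i) i = e0 := by decide
theorem I4 : ∀ p : Fin 9, clsF (repF p) = p := by decide
theorem I5 : ∀ (i : Fin 72) (p : Fin 9), clsF (tab (tab i (repF p)) (invF i)) = p := by decide
theorem I6 : ∀ j : Fin 72, tab (tab (wF j) (repF (clsF j))) (invF (wF j)) = j := by decide

theorem F1 (i j : Fin 72) : mT i * mT j = mT (tab i j) := by
  have H : ∀ (n : Nat) (j : Fin 72), j.val ≤ n → ∀ i, mT i * mT j = mT (tab i j) := by
    intro n
    induction n with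
    | zero => intro j hj i; exact G2 i j (by omega)
    | succ n ih =>
      intro j hj i
      by_cases h2 : j.val < 2
      · exact G2 i j h2
      · obtain ⟨hj1, hp1, hp2⟩ := I2 j (by omega)
        calc mT i * mT j = mT i * (mT (p1F j) * mT (p2F j)) := by
              rw [ih (p2F j) (by omega) (p1F j), hj1]
        _ = mT i * mT (p1F j) * mT (p2F j) := (mul_assoc _ _ _).symm
        _ = mT (tab i (p1F j)) * mT (p2F j) := by rw [ih (p1F j) (by omega) i]
        _ = mT (tab (tab i (p1F j)) (p2F j)) := ih (p2F j) (by omega) _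
        _ = mT (tab i j) := by rw [I1 i j (by omega)]
  exact H j.val j le_rfl i

theorem Finv (i : Fin 72) : mT i * mT (invF i) = 1 ∧ mT (invF i) * mT i = 1 := by
  constructor
  · rw [F1 i (invF i), (I3 i).1]; exact G3
  · rw [F1 (invF i) i, (I3 i).2]; exact G3

def u (i : Fin 72) : GL (Fin 4) (ZMod 2) := ⟨mT i, mT (invF i), (Finv i).1, (Finv i).2⟩

theorem uMul (i j : Fin 72) : u i * u j = u (tab i j) := Units.ext (F1 i j)

theorem uOne : u e0 = 1 := Units.ext G3

theorem uInv (i : Fin 72) : (u i)⁻¹ = u (invF i) := by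
  apply inv_eq_of_mul_eq_one_right
  rw [uMul, (I3 i).1, uOne]

theorem uInj {a b : Fin 72} (h : u a = u b) : a = b := G4 a b (congrArg Units.val h)

def K : Subgroup (GL (Fin 4) (ZMod 2)) where
  carrier := Set.range u
  mul_mem' := by rintro x y ⟨i, rfl⟩ ⟨j, rfl⟩; exact ⟨tab i j, (uMul i j).symm⟩
  one_mem' := ⟨e0, uOne⟩
  inv_mem' := by rintro x ⟨i, rfl⟩; exact ⟨invF i, (uInv i).symm⟩

theorem mem_K (i : Fin 72) : u i ∈ K := ⟨i, rfl⟩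

def R (p : Fin 9) : K := ⟨u (repF p), mem_K _⟩

theorem cardK : Nat.card (ConjClasses K) = 9 := by
  have hf : Function.Bijective (fun p : Fin 9 => ConjClasses.mk (R p)) := by
    constructor
    · intro p q h
      have hconj : IsConj (R p) (R q) := ConjClasses.mk_eq_mk_iff_isConj.mp h
      rw [isConj_iff] at hconj
      obtain ⟨c, hcEq⟩ := hconj
      obtain ⟨i, hi⟩ := c.2
      have hval : (c : GL (Fin 4) (ZMod 2)) * u (repF p) * (c : GL (Fin 4) (ZMod 2))⁻¹
          = u (repF q) := congrArg Subtype.val hcEq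
      rw [← hi, uInv, uMul, uMul] at hval
      have hidx : tab (tab i (repF p)) (invF i) = repF q := uInj hval
      have h5 := I5 i p
      rw [hidx, I4 q] at h5
      exact h5.symm
    · intro x
      obtain ⟨k, rfl⟩ := ConjClasses.mk_surjective x
      obtain ⟨j, hj⟩ := k.2
      refine ⟨clsF j, ?_⟩
      apply ConjClasses.mk_eq_mk_iff_isConj.mpr
      rw [isConj_iff]
      refine ⟨⟨u (wF j), mem_K _⟩, ?_⟩
      apply Subtype.ext
      show u (wF j) * u (repF (clsF j)) * (u (wF j))⁻¹ = (k : GL (Fin 4) (ZMod 2))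
      rw [uInv, uMul, uMul, I6 j, hj]
  calc Nat.card (ConjClasses K) = Nat.card (Fin 9) :=
        (Nat.card_eq_of_bijective _ hf).symm
  _ = 9 := by simp

end ODiscAux

open ODiscAux in
/-- The subgroup of `GL₄(𝔽₂)` generated by the matrices
`g₁ = [[1,0,0,0],[0,1,0,0],[0,0,0,1],[0,0,1,0]]` and
`g₂ = [[0,1,0,1],[1,0,0,0],[0,0,0,1],[1,0,1,0]]` has exactly `9` conjugacy classes. -/
theorem conjClasses_O_disc_U2_U2 (g₁ g₂ : GL (Fin 4) (ZMod 2))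
    (hg₁ : (g₁ : Matrix (Fin 4) (Fin 4) (ZMod 2)) =
      !![1,0,0,0; 0,1,0,0; 0,0,0,1; 0,0,1,0])
    (hg₂ : (g₂ : Matrix (Fin 4) (Fin 4) (ZMod 2)) =
      !![0,1,0,1; 1,0,0,0; 0,0,0,1; 1,0,1,0]) :
    Nat.card (ConjClasses (Subgroup.closure ({g₁, g₂} : Set (GL (Fin 4) (ZMod 2))))) = 9 := by
  have hg1u : g₁ = u z0 := Units.ext (by rw [hg₁]; exact G1a.symm)
  have hg2u : g₂ = u z1 := Units.ext (by rw [hg₂]; exact G1b.symm)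
  have hc : Subgroup.closure ({g₁, g₂} : Set (GL (Fin 4) (ZMod 2))) = K := by
    apply le_antisymm
    · apply (Subgroup.closure_le K).mpr
      intro x hx
      rcases hx with rfl | hx
      · exact ⟨z0, hg1u.symm⟩
      · rw [Set.mem_singleton_iff] at hx; subst hx; exact ⟨z1, hg2u.symm⟩
    · have gen : ∀ (n : Nat) (i : Fin 72), i.val ≤ n →
          u i ∈ Subgroup.closure ({g₁, g₂} : Set (GL (Fin 4) (ZMod 2))) := by
        intro n
        induction n with
        | zero =>
          intro i hi
          rw [show i = z0 from Fin.ext (by simp only [z0]; omega), ← hg1u]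
          exact Subgroup.subset_closure (Set.mem_insert _ _)
        | succ n ih =>
          intro i hi
          by_cases h2 : i.val < 2
          · by_cases h0 : i.val = 0
            · rw [show i = z0 from Fin.ext (by simp only [z0]; omega), ← hg1u]
              exact Subgroup.subset_closure (Set.mem_insert _ _)
            · rw [show i = z1 from Fin.ext (by simp only [z1]; omega), ← hg2u]
              exact Subgroup.subset_closure (Set.mem_insert_of_mem _ rfl)
          · obtain ⟨hj1, hp1, hp2⟩ := I2 i (by omega)
            rw [← hj1, ← uMul]
            exact mul_mem (ih _ (by omega)) (ih _ (by omega))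
      rintro x ⟨i, rfl⟩
      exact gen i.val i le_rfl
  rw [hc]
  exact cardK
end

section
/- Let G be the subgroup of GL₄(𝔽₂) generated by g₁ = [[1,0,0,0],[0,1,0,0],[0,0,0,1],[0,0,1,0]] and g₂ = [[0,1,0,1],[1,0,0,0],[0,0,0,1],[1,0,1,0]], and let h₄ = [[0,0,0,1],[0,0,1,0],[1,0,0,0],[0,1,0,0]] and h₂ = [[0,0,1,0],[0,0,0,1],[1,0,0,0],[0,1,0,0]]. Then h₄ and h₂ belong to G, every element of G of order 4 is conjugate in G to h₄, and h₄² is not conjugate in G to h₂. -/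
-- auxiliary defs

abbrev O4B4 := Bool × Bool × Bool × Bool
abbrev O4R := O4B4 × O4B4 × O4B4 × O4B4
instance : DecidableEq O4B4 := instDecidableEqProd
instance : DecidableEq O4R := instDecidableEqProd

def b2z : Bool → ZMod 2 := fun b => cond b 1 0

lemma b2z_xor (x y : Bool) : b2z (xor x y) = b2z x + b2z y := by cases x <;> cases y <;> decide
lemma b2z_and (x y : Bool) : b2z (x && y) = b2z x * b2z y := by cases x <;> cases y <;> decide
lemma b2z_injective : Function.Injective b2z := by decide

def emb (r : O4R) : Matrix (Fin 4) (Fin 4) (ZMod 2) := !![b2z r.1.1, b2z r.1.2.1, b2z r.1.2.2.1, b2z r.1.2.2.2; b2z r.2.1.1, b2z r.2.1.2.1, b2z r.2.1.2.2.1, b2z r.2.1.2.2.2; b2z r.2.2.1.1, b2z r.2.2.1.2.1, b2z r.2.2.1.2.2.1, b2z r.2.2.1.2.2.2; b2z r.2.2.2.1, b2z r.2.2.2.2.1, b2z r.2.2.2.2.2.1, b2z r.2.2.2.2.2.2]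

def rmul (a b : O4R) : O4R :=
  (((xor (xor (xor (a.1.1 && b.1.1) (a.1.2.1 && b.2.1.1)) (a.1.2.2.1 && b.2.2.1.1)) (a.1.2.2.2 && b.2.2.2.1)), (xor (xor (xor (a.1.1 && b.1.2.1) (a.1.2.1 && b.2.1.2.1)) (a.1.2.2.1 && b.2.2.1.2.1)) (a.1.2.2.2 && b.2.2.2.2.1)), (xor (xor (xor (a.1.1 && b.1.2.2.1) (a.1.2.1 && b.2.1.2.2.1)) (a.1.2.2.1 && b.2.2.1.2.2.1)) (a.1.2.2.2 && b.2.2.2.2.2.1)), (xor (xor (xor (a.1.1 && b.1.2.2.2) (a.1.2.1 && b.2.1.2.2.2)) (a.1.2.2.1 && b.2.2.1.2.2.2)) (a.1.2.2.2 && b.2.2.2.2.2.2))),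
   ((xor (xor (xor (a.2.1.1 && b.1.1) (a.2.1.2.1 && b.2.1.1)) (a.2.1.2.2.1 && b.2.2.1.1)) (a.2.1.2.2.2 && b.2.2.2.1)), (xor (xor (xor (a.2.1.1 && b.1.2.1) (a.2.1.2.1 && b.2.1.2.1)) (a.2.1.2.2.1 && b.2.2.1.2.1)) (a.2.1.2.2.2 && b.2.2.2.2.1)), (xor (xor (xor (a.2.1.1 && b.1.2.2.1) (a.2.1.2.1 && b.2.1.2.2.1)) (a.2.1.2.2.1 && b.2.2.1.2.2.1)) (a.2.1.2.2.2 && b.2.2.2.2.2.1)), (xor (xor (xor (a.2.1.1 && b.1.2.2.2) (a.2.1.2.1 && b.2.1.2.2.2)) (a.2.1.2.2.1 && b.2.2.1.2.2.2)) (a.2.1.2.2.2 && b.2.2.2.2.2.2))),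
   ((xor (xor (xor (a.2.2.1.1 && b.1.1) (a.2.2.1.2.1 && b.2.1.1)) (a.2.2.1.2.2.1 && b.2.2.1.1)) (a.2.2.1.2.2.2 && b.2.2.2.1)), (xor (xor (xor (a.2.2.1.1 && b.1.2.1) (a.2.2.1.2.1 && b.2.1.2.1)) (a.2.2.1.2.2.1 && b.2.2.1.2.1)) (a.2.2.1.2.2.2 && b.2.2.2.2.1)), (xor (xor (xor (a.2.2.1.1 && b.1.2.2.1) (a.2.2.1.2.1 && b.2.1.2.2.1)) (a.2.2.1.2.2.1 && b.2.2.1.2.2.1)) (a.2.2.1.2.2.2 && b.2.2.2.2.2.1)), (xor (xor (xor (a.2.2.1.1 && b.1.2.2.2) (a.2.2.1.2.1 && b.2.1.2.2.2)) (a.2.2.1.2.2.1 && b.2.2.1.2.2.2)) (a.2.2.1.2.2.2 && b.2.2.2.2.2.2))),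
   ((xor (xor (xor (a.2.2.2.1 && b.1.1) (a.2.2.2.2.1 && b.2.1.1)) (a.2.2.2.2.2.1 && b.2.2.1.1)) (a.2.2.2.2.2.2 && b.2.2.2.1)), (xor (xor (xor (a.2.2.2.1 && b.1.2.1) (a.2.2.2.2.1 && b.2.1.2.1)) (a.2.2.2.2.2.1 && b.2.2.1.2.1)) (a.2.2.2.2.2.2 && b.2.2.2.2.1)), (xor (xor (xor (a.2.2.2.1 && b.1.2.2.1) (a.2.2.2.2.1 && b.2.1.2.2.1)) (a.2.2.2.2.2.1 && b.2.2.1.2.2.1)) (a.2.2.2.2.2.2 && b.2.2.2.2.2.1)), (xor (xor (xor (a.2.2.2.1 && b.1.2.2.2) (a.2.2.2.2.1 && b.2.1.2.2.2)) (a.2.2.2.2.2.1 && b.2.2.1.2.2.2)) (a.2.2.2.2.2.2 && b.2.2.2.2.2.2))))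

def idR : O4R := ((true, false, false, false), (false, true, false, false), (false, false, true, false), (false, false, false, true))
def rg1 : O4R := ((true, false, false, false), (false, true, false, false), (false, false, false, true), (false, false, true, false))
def rg2 : O4R := ((false, true, false, true), (true, false, false, false), (false, false, false, true), (true, false, true, false))
def rg1i : O4R := ((true, false, false, false), (false, true, false, false), (false, false, false, true), (false, false, true, false))
def rg2i : O4R := ((false, true, false, false), (true, false, true, false), (false, true, false, true), (false, false, true, false))
def rh4 : O4R := ((false, false, false, true), (false, false, true, false), (true, false, false, false), (false, true, false, false))
def rh2 : O4R := ((false, false, true, false), (false, false, false, true), (true, false, false, false), (false, true, false, false))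

def OL : List O4R := [
  ((true, false, false, false), (false, true, false, false), (false, false, true, false), (false, false, false, true)),
  ((true, false, false, false), (false, true, false, false), (false, false, false, true), (false, false, true, false)),
  ((false, true, false, true), (true, false, false, false), (false, false, false, true), (true, false, true, false)),
  ((false, true, false, true), (true, false, false, false), (true, false, true, false), (false, false, false, true)),
  ((false, true, true, false), (true, false, false, false), (false, false, true, false), (true, false, false, true)),
  ((false, false, true, false), (false, true, false, true), (true, false, true, false), (false, true, false, false)),
  ((false, true, true, false), (true, false, false, false), (true, false, false, true), (false, false, true, false)),
  ((false, false, true, false), (false, true, false, true), (false, true, false, false), (true, false, true, false)),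
  ((true, false, false, true), (false, true, false, true), (false, false, false, true), (true, true, true, true)),
  ((false, false, false, true), (false, true, true, false), (true, false, false, true), (false, true, false, false)),
  ((false, false, false, true), (false, false, true, false), (false, true, false, false), (true, false, false, false)),
  ((true, false, false, true), (false, true, false, true), (true, true, true, true), (false, false, false, true)),
  ((false, false, false, true), (false, true, true, false), (false, true, false, false), (true, false, false, true)),
  ((false, false, false, true), (false, false, true, false), (true, false, false, false), (false, true, false, false)),
  ((true, false, true, false), (false, true, true, false), (false, false, true, false), (true, true, true, true)),
  ((true, true, true, true), (false, false, true, false), (true, false, true, false), (false, true, true, false)),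
  ((true, false, true, false), (true, false, false, true), (true, true, true, true), (true, false, false, false)),
  ((false, false, true, false), (false, false, false, true), (false, true, false, false), (true, false, false, false)),
  ((true, false, true, false), (false, false, false, true), (true, false, false, false), (false, true, false, true)),
  ((true, false, true, false), (false, true, true, false), (true, true, true, true), (false, false, true, false)),
  ((true, true, true, true), (false, false, true, false), (false, true, true, false), (true, false, true, false)),
  ((true, false, true, false), (true, false, false, true), (true, false, false, false), (true, true, true, true)),
  ((false, false, true, false), (false, false, false, true), (true, false, false, false), (false, true, false, false)),
  ((true, false, true, false), (false, false, false, true), (false, true, false, true), (true, false, false, false)),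
  ((false, true, false, false), (true, false, false, true), (false, false, false, true), (false, true, true, false)),
  ((true, true, true, true), (false, false, false, true), (true, false, false, true), (false, true, false, true)),
  ((false, true, true, false), (false, false, false, true), (false, true, false, false), (true, false, false, true)),
  ((true, false, false, true), (true, false, true, false), (true, true, true, true), (true, false, false, false)),
  ((false, true, false, false), (true, true, true, true), (false, true, true, false), (false, true, false, true)),
  ((false, false, false, true), (true, false, true, false), (true, false, false, false), (false, true, false, true)),
  ((true, false, false, true), (false, false, true, false), (true, false, false, false), (false, true, true, false)),
  ((false, true, false, false), (true, false, true, false), (false, true, false, true), (false, false, true, false)),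
  ((false, true, false, false), (true, false, false, true), (false, true, true, false), (false, false, false, true)),
  ((true, true, true, true), (false, false, false, true), (false, true, false, true), (true, false, false, true)),
  ((false, true, true, false), (false, false, false, true), (true, false, false, true), (false, true, false, false)),
  ((true, false, false, true), (true, false, true, false), (true, false, false, false), (true, true, true, true)),
  ((false, true, false, false), (true, true, true, true), (false, true, false, true), (false, true, true, false)),
  ((false, false, false, true), (true, false, true, false), (false, true, false, true), (true, false, false, false)),
  ((true, false, false, true), (false, false, true, false), (false, true, true, false), (true, false, false, false)),
  ((false, true, false, false), (true, false, true, false), (false, false, true, false), (false, true, false, true)),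
  ((true, false, false, false), (true, true, true, true), (true, false, true, false), (true, false, false, true)),
  ((false, true, true, false), (true, false, true, false), (true, true, true, true), (false, false, true, false)),
  ((false, true, false, true), (false, false, true, false), (false, true, false, false), (true, false, true, false)),
  ((true, true, true, true), (false, true, false, false), (false, true, true, false), (false, true, false, true)),
  ((true, false, false, false), (false, true, true, false), (true, false, false, true), (false, false, true, false)),
  ((false, false, true, false), (true, false, false, true), (true, false, false, false), (false, true, true, false)),
  ((true, false, true, false), (false, true, false, false), (false, true, false, true), (false, false, true, false)),
  ((true, false, false, false), (true, true, true, true), (true, false, false, true), (true, false, true, false)),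
  ((false, true, true, false), (true, false, true, false), (false, false, true, false), (true, true, true, true)),
  ((false, true, false, true), (false, false, true, false), (true, false, true, false), (false, true, false, false)),
  ((true, true, true, true), (false, true, false, false), (false, true, false, true), (false, true, true, false)),
  ((true, false, false, false), (false, true, true, false), (false, false, true, false), (true, false, false, true)),
  ((false, false, true, false), (true, false, false, true), (false, true, true, false), (true, false, false, false)),
  ((true, false, true, false), (false, true, false, false), (false, false, true, false), (false, true, false, true)),
  ((false, true, false, true), (false, true, true, false), (false, true, false, false), (true, true, true, true)),
  ((false, true, false, true), (true, false, false, true), (true, true, true, true), (false, false, false, true)),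
  ((true, false, false, true), (false, true, false, false), (false, true, true, false), (false, false, false, true)),
  ((true, false, false, false), (false, true, false, true), (true, false, true, false), (false, false, false, true)),
  ((false, false, false, true), (true, true, true, true), (false, true, false, true), (true, false, false, true)),
  ((false, true, false, false), (true, false, false, false), (false, false, true, false), (false, false, false, true)),
  ((false, true, false, true), (false, true, true, false), (true, true, true, true), (false, true, false, false)),
  ((false, true, false, true), (true, false, false, true), (false, false, false, true), (true, true, true, true)),
  ((true, false, false, true), (false, true, false, false), (false, false, false, true), (false, true, true, false)),
  ((true, false, false, false), (false, true, false, true), (false, false, false, true), (true, false, true, false)),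
  ((false, false, false, true), (true, true, true, true), (true, false, false, true), (false, true, false, true)),
  ((false, true, false, false), (true, false, false, false), (false, false, false, true), (false, false, true, false)),
  ((false, true, true, false), (false, true, false, true), (false, true, false, false), (true, true, true, true)),
  ((false, false, true, false), (true, true, true, true), (false, true, true, false), (true, false, true, false)),
  ((true, true, true, true), (true, false, false, false), (true, false, false, true), (true, false, true, false)),
  ((false, true, true, false), (false, true, false, true), (true, true, true, true), (false, true, false, false)),
  ((false, false, true, false), (true, true, true, true), (true, false, true, false), (false, true, true, false)),
  ((true, true, true, true), (true, false, false, false), (true, false, true, false), (true, false, false, true))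
]

def OL4 : List O4R := [
  ((false, true, false, true), (true, false, false, false), (true, false, true, false), (false, false, false, true)),
  ((false, true, true, false), (true, false, false, false), (false, false, true, false), (true, false, false, true)),
  ((false, false, false, true), (false, false, true, false), (true, false, false, false), (false, true, false, false)),
  ((true, true, true, true), (false, false, true, false), (true, false, true, false), (false, true, true, false)),
  ((true, false, true, false), (true, false, false, true), (true, true, true, true), (true, false, false, false)),
  ((false, false, true, false), (false, false, false, true), (false, true, false, false), (true, false, false, false)),
  ((false, true, false, false), (true, false, false, true), (false, true, true, false), (false, false, false, true)),
  ((true, true, true, true), (false, false, false, true), (false, true, false, true), (true, false, false, true)),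
  ((true, false, false, true), (true, false, true, false), (true, false, false, false), (true, true, true, true)),
  ((false, true, false, false), (true, false, true, false), (false, false, true, false), (false, true, false, true)),
  ((true, false, false, false), (false, true, true, false), (true, false, false, true), (false, false, true, false)),
  ((true, false, true, false), (false, true, false, false), (false, true, false, true), (false, false, true, false)),
  ((false, true, false, true), (false, true, true, false), (true, true, true, true), (false, true, false, false)),
  ((true, false, false, true), (false, true, false, false), (false, false, false, true), (false, true, true, false)),
  ((true, false, false, false), (false, true, false, true), (false, false, false, true), (true, false, true, false)),
  ((false, false, false, true), (true, true, true, true), (true, false, false, true), (false, true, false, true)),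
  ((false, true, true, false), (false, true, false, true), (false, true, false, false), (true, true, true, true)),
  ((false, false, true, false), (true, true, true, true), (false, true, true, false), (true, false, true, false))
]

set_option maxHeartbeats 4000000 in
lemma emb_mul (a b : O4R) : emb a * emb b = emb (rmul a b) := by
  obtain ⟨⟨a00,a01,a02,a03⟩,⟨a10,a11,a12,a13⟩,⟨a20,a21,a22,a23⟩,⟨a30,a31,a32,a33⟩⟩ := a
  obtain ⟨⟨b00,b01,b02,b03⟩,⟨b10,b11,b12,b13⟩,⟨b20,b21,b22,b23⟩,⟨b30,b31,b32,b33⟩⟩ := b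
  ext i j
  fin_cases i <;> fin_cases j <;>
    simp [emb, rmul, b2z_xor, b2z_and, Matrix.mul_apply, Fin.sum_univ_four, add_assoc]

set_option maxHeartbeats 1000000 in
lemma emb_one : emb idR = 1 := by decide

lemma emb_inj : Function.Injective emb := by
  intro a b h
  obtain ⟨⟨a00,a01,a02,a03⟩,⟨a10,a11,a12,a13⟩,⟨a20,a21,a22,a23⟩,⟨a30,a31,a32,a33⟩⟩ := a
  obtain ⟨⟨b00,b01,b02,b03⟩,⟨b10,b11,b12,b13⟩,⟨b20,b21,b22,b23⟩,⟨b30,b31,b32,b33⟩⟩ := b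
  have h00 : a00 = b00 := b2z_injective (congrFun (congrFun h 0) 0)
  have h01 : a01 = b01 := b2z_injective (congrFun (congrFun h 0) 1)
  have h02 : a02 = b02 := b2z_injective (congrFun (congrFun h 0) 2)
  have h03 : a03 = b03 := b2z_injective (congrFun (congrFun h 0) 3)
  have h10 : a10 = b10 := b2z_injective (congrFun (congrFun h 1) 0)
  have h11 : a11 = b11 := b2z_injective (congrFun (congrFun h 1) 1)
  have h12 : a12 = b12 := b2z_injective (congrFun (congrFun h 1) 2)
  have h13 : a13 = b13 := b2z_injective (congrFun (congrFun h 1) 3)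
  have h20 : a20 = b20 := b2z_injective (congrFun (congrFun h 2) 0)
  have h21 : a21 = b21 := b2z_injective (congrFun (congrFun h 2) 1)
  have h22 : a22 = b22 := b2z_injective (congrFun (congrFun h 2) 2)
  have h23 : a23 = b23 := b2z_injective (congrFun (congrFun h 2) 3)
  have h30 : a30 = b30 := b2z_injective (congrFun (congrFun h 3) 0)
  have h31 : a31 = b31 := b2z_injective (congrFun (congrFun h 3) 1)
  have h32 : a32 = b32 := b2z_injective (congrFun (congrFun h 3) 2)
  have h33 : a33 = b33 := b2z_injective (congrFun (congrFun h 3) 3)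
  subst h00 h01 h02 h03 h10 h11 h12 h13 h20 h21 h22 h23 h30 h31 h32 h33
  rfl

lemma emb_pow6 (a : O4R) : (emb a) ^ 6 = emb (rmul (rmul (rmul (rmul (rmul a a) a) a) a) a) := by
  rw [show (6:ℕ) = 1+1+1+1+1+1 from by norm_num, pow_succ, pow_succ, pow_succ, pow_succ,
    pow_succ, pow_one, emb_mul, emb_mul, emb_mul, emb_mul, emb_mul]

set_option maxRecDepth 100000 in
lemma step1 : ∀ a ∈ OL, rmul a rg1 ∈ OL := by decide
set_option maxRecDepth 100000 in
lemma step2 : ∀ a ∈ OL, rmul a rg2 ∈ OL := by decide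
set_option maxRecDepth 100000 in
lemma step1i : ∀ a ∈ OL, rmul a rg1i ∈ OL := by decide
set_option maxRecDepth 100000 in
lemma step2i : ∀ a ∈ OL, rmul a rg2i ∈ OL := by decide
set_option maxRecDepth 100000 in
lemma idR_mem : idR ∈ OL := by decide
set_option maxRecDepth 100000 in
lemma class4 : ∀ a ∈ OL, a ∈ OL4 ∨ rmul (rmul (rmul (rmul (rmul a a) a) a) a) a = idR := by decide
set_option maxRecDepth 100000 in
lemma negpart : ∀ a ∈ OL, rmul a (rmul rh4 rh4) ≠ rmul rh2 a := by decide

lemma val_inv {u : GL (Fin 4) (ZMod 2)} {m : Matrix (Fin 4) (Fin 4) (ZMod 2)}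
    (h : (↑u : Matrix (Fin 4) (Fin 4) (ZMod 2)) * m = 1) :
    (↑(u⁻¹) : Matrix (Fin 4) (Fin 4) (ZMod 2)) = m := by
  calc (↑(u⁻¹) : Matrix (Fin 4) (Fin 4) (ZMod 2)) = ↑(u⁻¹) * (↑u * m) := by rw [h, mul_one]
    _ = (↑(u⁻¹) * ↑u) * m := (mul_assoc _ _ _).symm
    _ = m := by rw [← Units.val_mul, inv_mul_cancel, Units.val_one, one_mul]

-- end aux

/-- Let `G` be the subgroup of `GL₄(𝔽₂)` generated by
`g₁ = [[1,0,0,0],[0,1,0,0],[0,0,0,1],[0,0,1,0]]` and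
`g₂ = [[0,1,0,1],[1,0,0,0],[0,0,0,1],[1,0,1,0]]`, and let
`h₄ = [[0,0,0,1],[0,0,1,0],[1,0,0,0],[0,1,0,0]]` and
`h₂ = [[0,0,1,0],[0,0,0,1],[1,0,0,0],[0,1,0,0]]`.
Then `h₄, h₂ ∈ G`, every element of `G` of order `4` is conjugate to `h₄` by an
element of `G`, and `h₄²` is not conjugate to `h₂` by an element of `G`. -/
theorem order_four_conjugacy_O_disc_U2_U2 (g₁ g₂ h₄ h₂ : GL (Fin 4) (ZMod 2))
    (hg₁ : (g₁ : Matrix (Fin 4) (Fin 4) (ZMod 2)) =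
      !![1,0,0,0; 0,1,0,0; 0,0,0,1; 0,0,1,0])
    (hg₂ : (g₂ : Matrix (Fin 4) (Fin 4) (ZMod 2)) =
      !![0,1,0,1; 1,0,0,0; 0,0,0,1; 1,0,1,0])
    (hh₄ : (h₄ : Matrix (Fin 4) (Fin 4) (ZMod 2)) =
      !![0,0,0,1; 0,0,1,0; 1,0,0,0; 0,1,0,0])
    (hh₂ : (h₂ : Matrix (Fin 4) (Fin 4) (ZMod 2)) =
      !![0,0,1,0; 0,0,0,1; 1,0,0,0; 0,1,0,0]) :
    h₄ ∈ Subgroup.closure ({g₁, g₂} : Set (GL (Fin 4) (ZMod 2))) ∧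
    h₂ ∈ Subgroup.closure ({g₁, g₂} : Set (GL (Fin 4) (ZMod 2))) ∧
    (∀ x ∈ Subgroup.closure ({g₁, g₂} : Set (GL (Fin 4) (ZMod 2))), orderOf x = 4 →
      ∃ c ∈ Subgroup.closure ({g₁, g₂} : Set (GL (Fin 4) (ZMod 2))),
        c * h₄ * c⁻¹ = x) ∧
    ¬ ∃ c ∈ Subgroup.closure ({g₁, g₂} : Set (GL (Fin 4) (ZMod 2))),
        c * (h₄ ^ 2) * c⁻¹ = h₂ := by
  have hg1e : (g₁ : Matrix (Fin 4) (Fin 4) (ZMod 2)) = emb rg1 := by rw [hg₁]; rfl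
  have hg2e : (g₂ : Matrix (Fin 4) (Fin 4) (ZMod 2)) = emb rg2 := by rw [hg₂]; rfl
  have hh4e : (h₄ : Matrix (Fin 4) (Fin 4) (ZMod 2)) = emb rh4 := by rw [hh₄]; rfl
  have hh2e : (h₂ : Matrix (Fin 4) (Fin 4) (ZMod 2)) = emb rh2 := by rw [hh₂]; rfl
  have hg1ie : ((g₁⁻¹ : GL (Fin 4) (ZMod 2)) : Matrix (Fin 4) (Fin 4) (ZMod 2)) = emb rg1i := by
    refine val_inv ?_
    rw [hg1e, emb_mul, show rmul rg1 rg1i = idR from by decide, emb_one]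
  have hg2ie : ((g₂⁻¹ : GL (Fin 4) (ZMod 2)) : Matrix (Fin 4) (Fin 4) (ZMod 2)) = emb rg2i := by
    refine val_inv ?_
    rw [hg2e, emb_mul, show rmul rg2 rg2i = idR from by decide, emb_one]
  have hg1c : g₁ ∈ Subgroup.closure ({g₁, g₂} : Set (GL (Fin 4) (ZMod 2))) :=
    Subgroup.subset_closure (Set.mem_insert _ _)
  have hg2c : g₂ ∈ Subgroup.closure ({g₁, g₂} : Set (GL (Fin 4) (ZMod 2))) :=
    Subgroup.subset_closure (Set.mem_insert_of_mem _ rfl)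
  have hP : ∀ y, y ∈ Subgroup.closure ({g₁, g₂} : Set (GL (Fin 4) (ZMod 2))) →
      ∃ r ∈ OL, (y : Matrix (Fin 4) (Fin 4) (ZMod 2)) = emb r := by
    intro y hy
    induction hy using Subgroup.closure_induction_right with
    | one => exact ⟨idR, idR_mem, by rw [Units.val_one]; exact emb_one.symm⟩
    | mul_right z hz w hw ih =>
      obtain ⟨r, hr, hzr⟩ := ih
      rcases hw with rfl | rfl
      · exact ⟨rmul r rg1, step1 r hr, by rw [Units.val_mul, hzr, hg1e, emb_mul]⟩
      · exact ⟨rmul r rg2, step2 r hr, by rw [Units.val_mul, hzr, hg2e, emb_mul]⟩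
    | mul_inv_cancel z hz w hw ih =>
      obtain ⟨r, hr, hzr⟩ := ih
      rcases hw with rfl | rfl
      · exact ⟨rmul r rg1i, step1i r hr, by rw [Units.val_mul, hzr, hg1ie, emb_mul]⟩
      · exact ⟨rmul r rg2i, step2i r hr, by rw [Units.val_mul, hzr, hg2ie, emb_mul]⟩
  refine ⟨?_, ?_, ?_, ?_⟩
  · have : h₄ = g₁ * (g₂ * (g₂ * (g₂))) := by
      refine Units.ext ?_
      simp only [hh4e, Units.val_mul, Units.val_one, hg1e, hg2e, ← emb_one, emb_mul] <;>
        exact congrArg emb (by decide)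
    rw [this]; exact mul_mem hg1c (mul_mem hg2c (mul_mem hg2c (hg2c)))
  · have : h₂ = g₁ * (g₂ * (g₂ * (g₂ * (g₁)))) := by
      refine Units.ext ?_
      simp only [hh2e, Units.val_mul, Units.val_one, hg1e, hg2e, ← emb_one, emb_mul] <;>
        exact congrArg emb (by decide)
    rw [this]; exact mul_mem hg1c (mul_mem hg2c (mul_mem hg2c (mul_mem hg2c (hg1c))))
  · intro x hx hord
    obtain ⟨r, hrL, hxr⟩ := hP x hx
    rcases class4 r hrL with h4m | h6
    · simp only [OL4, List.mem_cons, List.not_mem_nil, or_false] at h4m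
      rcases h4m with (rfl|rfl|rfl|rfl|rfl|rfl|rfl|rfl|rfl|rfl|rfl|rfl|rfl|rfl|rfl|rfl|rfl|rfl)
      · refine ⟨g₂ * (g₁ * (g₂ * (g₁))), mul_mem hg2c (mul_mem hg1c (mul_mem hg2c (hg1c))), ?_⟩
        rw [mul_inv_eq_iff_eq_mul]
        refine Units.ext ?_
        simp only [Units.val_mul, Units.val_one, hg1e, hg2e, hh4e, hxr, ← emb_one, emb_mul] <;>
          exact congrArg emb (by decide)
      · refine ⟨g₁ * (g₂ * (g₁ * (g₂ * (g₁)))), mul_mem hg1c (mul_mem hg2c (mul_mem hg1c (mul_mem hg2c (hg1c)))), ?_⟩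
        rw [mul_inv_eq_iff_eq_mul]
        refine Units.ext ?_
        simp only [Units.val_mul, Units.val_one, hg1e, hg2e, hh4e, hxr, ← emb_one, emb_mul] <;>
          exact congrArg emb (by decide)
      · refine ⟨(1 : GL (Fin 4) (ZMod 2)), one_mem _, ?_⟩
        rw [mul_inv_eq_iff_eq_mul]
        refine Units.ext ?_
        simp only [Units.val_mul, Units.val_one, hg1e, hg2e, hh4e, hxr, ← emb_one, emb_mul] <;>
          exact congrArg emb (by decide)
      · refine ⟨g₂, hg2c, ?_⟩
        rw [mul_inv_eq_iff_eq_mul]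
        refine Units.ext ?_
        simp only [Units.val_mul, Units.val_one, hg1e, hg2e, hh4e, hxr, ← emb_one, emb_mul] <;>
          exact congrArg emb (by decide)
      · refine ⟨g₂ * (g₂), mul_mem hg2c (hg2c), ?_⟩
        rw [mul_inv_eq_iff_eq_mul]
        refine Units.ext ?_
        simp only [Units.val_mul, Units.val_one, hg1e, hg2e, hh4e, hxr, ← emb_one, emb_mul] <;>
          exact congrArg emb (by decide)
      · refine ⟨g₁, hg1c, ?_⟩
        rw [mul_inv_eq_iff_eq_mul]
        refine Units.ext ?_
        simp only [Units.val_mul, Units.val_one, hg1e, hg2e, hh4e, hxr, ← emb_one, emb_mul] <;>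
          exact congrArg emb (by decide)
      · refine ⟨g₂ * (g₁ * (g₂)), mul_mem hg2c (mul_mem hg1c (hg2c)), ?_⟩
        rw [mul_inv_eq_iff_eq_mul]
        refine Units.ext ?_
        simp only [Units.val_mul, Units.val_one, hg1e, hg2e, hh4e, hxr, ← emb_one, emb_mul] <;>
          exact congrArg emb (by decide)
      · refine ⟨g₁ * (g₂), mul_mem hg1c (hg2c), ?_⟩
        rw [mul_inv_eq_iff_eq_mul]
        refine Units.ext ?_
        simp only [Units.val_mul, Units.val_one, hg1e, hg2e, hh4e, hxr, ← emb_one, emb_mul] <;>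
          exact congrArg emb (by decide)
      · refine ⟨g₁ * (g₂ * (g₂)), mul_mem hg1c (mul_mem hg2c (hg2c)), ?_⟩
        rw [mul_inv_eq_iff_eq_mul]
        refine Units.ext ?_
        simp only [Units.val_mul, Units.val_one, hg1e, hg2e, hh4e, hxr, ← emb_one, emb_mul] <;>
          exact congrArg emb (by decide)
      · refine ⟨g₁ * (g₂ * (g₁ * (g₂))), mul_mem hg1c (mul_mem hg2c (mul_mem hg1c (hg2c))), ?_⟩
        rw [mul_inv_eq_iff_eq_mul]
        refine Units.ext ?_
        simp only [Units.val_mul, Units.val_one, hg1e, hg2e, hh4e, hxr, ← emb_one, emb_mul] <;>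
          exact congrArg emb (by decide)
      · refine ⟨g₂ * (g₁ * (g₂ * (g₂))), mul_mem hg2c (mul_mem hg1c (mul_mem hg2c (hg2c))), ?_⟩
        rw [mul_inv_eq_iff_eq_mul]
        refine Units.ext ?_
        simp only [Units.val_mul, Units.val_one, hg1e, hg2e, hh4e, hxr, ← emb_one, emb_mul] <;>
          exact congrArg emb (by decide)
      · refine ⟨g₂ * (g₂ * (g₁ * (g₂ * (g₂)))), mul_mem hg2c (mul_mem hg2c (mul_mem hg1c (mul_mem hg2c (hg2c)))), ?_⟩
        rw [mul_inv_eq_iff_eq_mul]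
        refine Units.ext ?_
        simp only [Units.val_mul, Units.val_one, hg1e, hg2e, hh4e, hxr, ← emb_one, emb_mul] <;>
          exact congrArg emb (by decide)
      · refine ⟨g₁ * (g₂ * (g₁)), mul_mem hg1c (mul_mem hg2c (hg1c)), ?_⟩
        rw [mul_inv_eq_iff_eq_mul]
        refine Units.ext ?_
        simp only [Units.val_mul, Units.val_one, hg1e, hg2e, hh4e, hxr, ← emb_one, emb_mul] <;>
          exact congrArg emb (by decide)
      · refine ⟨g₁ * (g₂ * (g₂ * (g₁ * (g₂ * (g₂))))), mul_mem hg1c (mul_mem hg2c (mul_mem hg2c (mul_mem hg1c (mul_mem hg2c (hg2c))))), ?_⟩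
        rw [mul_inv_eq_iff_eq_mul]
        refine Units.ext ?_
        simp only [Units.val_mul, Units.val_one, hg1e, hg2e, hh4e, hxr, ← emb_one, emb_mul] <;>
          exact congrArg emb (by decide)
      · refine ⟨g₁ * (g₂ * (g₁ * (g₂ * (g₂)))), mul_mem hg1c (mul_mem hg2c (mul_mem hg1c (mul_mem hg2c (hg2c)))), ?_⟩
        rw [mul_inv_eq_iff_eq_mul]
        refine Units.ext ?_
        simp only [Units.val_mul, Units.val_one, hg1e, hg2e, hh4e, hxr, ← emb_one, emb_mul] <;>
          exact congrArg emb (by decide)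
      · refine ⟨g₂ * (g₂ * (g₁)), mul_mem hg2c (mul_mem hg2c (hg1c)), ?_⟩
        rw [mul_inv_eq_iff_eq_mul]
        refine Units.ext ?_
        simp only [Units.val_mul, Units.val_one, hg1e, hg2e, hh4e, hxr, ← emb_one, emb_mul] <;>
          exact congrArg emb (by decide)
      · refine ⟨g₂ * (g₁), mul_mem hg2c (hg1c), ?_⟩
        rw [mul_inv_eq_iff_eq_mul]
        refine Units.ext ?_
        simp only [Units.val_mul, Units.val_one, hg1e, hg2e, hh4e, hxr, ← emb_one, emb_mul] <;>
          exact congrArg emb (by decide)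
      · refine ⟨g₁ * (g₂ * (g₂ * (g₁))), mul_mem hg1c (mul_mem hg2c (mul_mem hg2c (hg1c))), ?_⟩
        rw [mul_inv_eq_iff_eq_mul]
        refine Units.ext ?_
        simp only [Units.val_mul, Units.val_one, hg1e, hg2e, hh4e, hxr, ← emb_one, emb_mul] <;>
          exact congrArg emb (by decide)
    · have hx6 : x ^ 6 = 1 := by
        refine Units.ext ?_
        rw [Units.val_pow_eq_pow_val, hxr, emb_pow6, h6, emb_one, Units.val_one]
      have hd := orderOf_dvd_of_pow_eq_one hx6
      rw [hord] at hd
      exact absurd hd (by norm_num)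
  · rintro ⟨c, hcG, hce⟩
    obtain ⟨r, hrL, hcr⟩ := hP c hcG
    rw [mul_inv_eq_iff_eq_mul] at hce
    have hv := congrArg Units.val hce
    simp only [Units.val_mul, Units.val_pow_eq_pow_val, hcr, hh4e, hh2e, pow_two, emb_mul] at hv
    exact negpart r hrL (emb_inj hv)
end
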